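/- The random algebra has no points: there is no Boolean algebra homomorphism from the quotient of Borel sets of [0,1] by null sets to the two-element Boolean algebra that preserves countable suprema. -/

import Mathlib

open MeasureTheory

/-- Borel subsets of the unit interval. -/
abbrev BorelUnitInterval := {s : Set (Set.Icc (0:ℝ) 1) // MeasurableSet s}

/-- Identify two Borel sets when their symmetric difference is Lebesgue-null. -/
instance nullSetoid : Setoid BorelUnitInterval :=
  ⟨fun s t => (s : Set (Set.Icc (0:ℝ) 1)) =ᵐ[volume] (t : Set (Set.Icc (0:ℝ) 1)),
    ⟨fun _ => Filter.EventuallyEq.rfl, Filter.EventuallyEq.symm, Filter.EventuallyEq.trans⟩⟩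

/-- The random algebra: Borel sets of `[0,1]` modulo Lebesgue-null sets. -/
def RandomAlgebra := Quotient nullSetoid

/-- The random algebra has no points: for any complete Boolean algebra structure on it
inducing the almost-everywhere order, there is no Boolean homomorphism to the
two-element Boolean algebra preserving countable suprema. -/
theorem randomAlgebra_has_no_points
    [inst : CompleteBooleanAlgebra RandomAlgebra]
    (hord : ∀ s t : BorelUnitInterval,
      (@LE.le RandomAlgebra _ (Quotient.mk nullSetoid s) (Quotient.mk nullSetoid t) ↔
        volume ((s : Set (Set.Icc (0:ℝ) 1)) \ (t : Set (Set.Icc (0:ℝ) 1))) = 0)) :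
    ¬ ∃ f : RandomAlgebra → Bool,
        f ⊤ = true ∧ f ⊥ = false ∧
        (∀ a b, f (a ⊓ b) = (f a && f b)) ∧
        (∀ a b, f (a ⊔ b) = (f a || f b)) ∧
        (∀ g : ℕ → RandomAlgebra, (f (⨆ n, g n) = true ↔ ∃ n, f (g n) = true)) := by
  rintro ⟨f, ftop, fbot, finf, _fsup, fSup⟩
  set mk : BorelUnitInterval → RandomAlgebra := Quotient.mk nullSetoid with hmk
  -- ⊤ is the class of univ
  have htop : (⊤ : RandomAlgebra) = mk ⟨Set.univ, MeasurableSet.univ⟩ := by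
    obtain ⟨t, ht⟩ := Quotient.exists_rep (⊤ : RandomAlgebra)
    refine le_antisymm ?_ le_top
    rw [← ht]
    exact (hord t ⟨Set.univ, MeasurableSet.univ⟩).2 (by simp)
  -- ⊥ is the class of ∅
  have hbot : (⊥ : RandomAlgebra) = mk ⟨∅, MeasurableSet.empty⟩ := by
    obtain ⟨t, ht⟩ := Quotient.exists_rep (⊥ : RandomAlgebra)
    refine le_antisymm bot_le ?_
    rw [← ht]
    exact (hord ⟨∅, MeasurableSet.empty⟩ t).2 (by simp)
  -- countable suprema are unions
  have hsup : ∀ g : ℕ → BorelUnitInterval,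
      (⨆ n, mk (g n)) = mk ⟨⋃ n, (g n).1, MeasurableSet.iUnion fun n => (g n).2⟩ := by
    intro g
    apply le_antisymm
    · refine iSup_le fun n => (hord _ _).2 ?_
      have he : (g n).1 \ (⋃ m, (g m).1) = ∅ :=
        Set.diff_eq_empty.2 (Set.subset_iUnion (fun m => (g m).1) n)
      simp [he]
    obtain ⟨u, hu⟩ : ∃ u, mk u = ⨆ n, mk (g n) := Quotient.exists_rep _
    rw [← hu]
    refine (hord _ u).2 ?_
    have h1 : ∀ n, volume ((g n).1 \ u.1) = 0 := fun n =>
      (hord (g n) u).1 (hu ▸ le_iSup (fun n => mk (g n)) n)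
    have : (⋃ n, (g n).1) \ u.1 = ⋃ n, ((g n).1 \ u.1) := Set.iUnion_diff _ _
    rw [this]
    exact measure_iUnion_null h1
  -- a set and its complement meet in ⊥
  have hinfc : ∀ s : BorelUnitInterval, mk s ⊓ mk ⟨s.1ᶜ, s.2.compl⟩ = ⊥ := by
    intro s
    obtain ⟨u, hu⟩ : ∃ u, mk u = mk s ⊓ mk ⟨s.1ᶜ, s.2.compl⟩ := Quotient.exists_rep _
    have h1 : volume (u.1 \ s.1) = 0 := (hord u s).1 (hu ▸ inf_le_left)
    have h2 : volume (u.1 \ s.1ᶜ) = 0 := (hord u ⟨s.1ᶜ, s.2.compl⟩).1 (hu ▸ inf_le_right)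
    have hu0 : volume u.1 = 0 := by
      have : u.1 = (u.1 \ s.1) ∪ (u.1 \ s.1ᶜ) := by
        rw [Set.diff_compl]; exact (Set.diff_union_inter u.1 s.1).symm
      rw [this]
      exact measure_union_null h1 h2
    rw [← hu, hbot]
    refine le_antisymm ((hord u _).2 (by simpa using hu0)) ?_
    exact (hord _ u).2 (by simp)
  -- the dyadic intervals
  set I : ℕ → ℕ → BorelUnitInterval := fun n k =>
    ⟨Subtype.val ⁻¹' Set.Icc ((k:ℝ)/2^n) ((k+1)/2^n),
      measurableSet_Icc.preimage measurable_subtype_coe⟩ with hI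
  -- for each n they cover
  have hcover : ∀ n, (⋃ k, (I n k).1) = Set.univ := by
    intro n
    ext x
    simp only [Set.mem_iUnion, Set.mem_univ, iff_true, hI, Set.mem_preimage, Set.mem_Icc]
    refine ⟨⌊(x:ℝ) * 2^n⌋₊, ?_, ?_⟩
    · rw [div_le_iff₀ (by positivity)]
      exact Nat.floor_le (mul_nonneg x.2.1 (by positivity))
    · rw [le_div_iff₀ (by positivity)]
      exact (Nat.lt_floor_add_one ((x:ℝ) * 2^n)).le
  -- for each n, f is true on some interval
  have hpick : ∀ n, ∃ k, f (mk (I n k)) = true := by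
    intro n
    rw [← fSup (fun k => mk (I n k)), hsup]
    have : mk ⟨⋃ k, (I n k).1, MeasurableSet.iUnion fun k => (I n k).2⟩ = (⊤ : RandomAlgebra) := by
      rw [htop]; congr 1; exact Subtype.ext (hcover n)
    rw [this]; exact ftop
  choose k hk using hpick
  -- the intersection of chosen intervals is null
  set S : Set (Set.Icc (0:ℝ) 1) := ⋂ n, (I n (k n)).1 with hS
  have hSle : ∀ n, volume S ≤ ENNReal.ofReal ((1/2)^n) := by
    intro n
    calc volume S ≤ volume (I n (k n)).1 := measure_mono (Set.iInter_subset _ n)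
      _ ≤ ENNReal.ofReal ((1/2)^n) := by
        rw [hI]
        rw [volume_preimage_coe measurableSet_Icc.nullMeasurableSet measurableSet_Icc]
        calc volume (Set.Icc ((k n:ℝ)/2^n) ((k n+1)/2^n) ∩ Set.Icc 0 1)
            ≤ volume (Set.Icc ((k n:ℝ)/2^n) ((k n+1)/2^n)) := measure_mono Set.inter_subset_left
          _ = ENNReal.ofReal ((k n+1)/2^n - k n/2^n) := Real.volume_Icc
          _ = ENNReal.ofReal ((1/2)^n) := by ring_nf; rw [one_div]
  have hS0 : volume S = 0 := by
    refine le_antisymm ?_ zero_le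
    have h2 : Filter.Tendsto (fun n : ℕ => ENNReal.ofReal ((1/2)^n)) Filter.atTop (nhds 0) := by
      have := tendsto_pow_atTop_nhds_zero_of_lt_one (by norm_num : (0:ℝ) ≤ 1/2) (by norm_num)
      simpa [ENNReal.ofReal_zero] using (ENNReal.tendsto_ofReal this)
    exact ge_of_tendsto' h2 hSle
  -- complements of chosen intervals
  set C : ℕ → BorelUnitInterval := fun n => ⟨(I n (k n)).1ᶜ, (I n (k n)).2.compl⟩ with hC
  have hCtop : (⨆ n, mk (C n)) = ⊤ := by
    rw [hsup]
    refine le_antisymm le_top ?_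
    rw [htop]
    refine (hord _ _).2 ?_
    have : Set.univ \ (⋃ n, (C n).1) = S := by
      rw [hS]; ext x; simp [hC, Set.mem_diff]
    rw [this]; exact hS0
  obtain ⟨n, hn⟩ := (fSup (fun n => mk (C n))).1 (by rw [hCtop]; exact ftop)
  have : f (mk (I n (k n)) ⊓ mk (C n)) = true := by
    rw [finf, hk n, hn]; rfl
  rw [hC, hinfc (I n (k n)), fbot] at this
  exact Bool.false_ne_true this
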